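/- Let L_D be a set of links of length in [r,R] whose endpoints all have pairwise distance at least r = δR, and suppose each link's fixed transmission power lies in [P_min, P_max] with ρ = P_max/P_min. Then the affectance of any link l_i ∈ L_D caused by the other links is at most c^{up}·ρ·φ, where φ = 2^{2κ+1}√3 π κ / (6(κ−2)δ^κ). -/

import Mathlib

open Metric MeasureTheory ENNReal

lemma my_packing (A : Finset (EuclideanSpace ℝ (Fin 2))) (T : EuclideanSpace ℝ (Fin 2))
    (ε a b : ℝ) (hε : 0 < ε) (ha : ε / 2 ≤ a) (hab : a ≤ b)
    (hsep : ∀ x ∈ A, ∀ y ∈ A, x ≠ y → ε ≤ dist x y)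
    (hd : ∀ x ∈ A, a ≤ dist x T ∧ dist x T ≤ b) :
    (A.card : ℝ) * (ε / 2) ^ 2 + (a - ε / 2) ^ 2 ≤ (b + ε / 2) ^ 2 := by
  set v : ℝ≥0∞ := volume (ball (0 : EuclideanSpace ℝ (Fin 2)) 1) with hv
  have hv0 : v ≠ 0 := (measure_ball_pos volume _ one_pos).ne'
  have hvt : v ≠ ⊤ := measure_ball_lt_top.ne
  have hdisj : Set.PairwiseDisjoint (A : Set (EuclideanSpace ℝ (Fin 2)))
      (fun x => ball x (ε / 2)) := by
    intro x hx y hy hxy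
    apply ball_disjoint_ball
    have := hsep x hx y hy hxy
    linarith
  have hUsub : (⋃ x ∈ A, ball x (ε / 2)) ⊆ closedBall T (b + ε / 2) := by
    intro y hy
    simp only [Set.mem_iUnion] at hy
    obtain ⟨x, hx, hyx⟩ := hy
    have h1 := (hd x hx).2
    have h2 := mem_ball.1 hyx
    simp only [mem_closedBall]
    calc dist y T ≤ dist y x + dist x T := dist_triangle _ _ _
      _ ≤ b + ε / 2 := by
          have h2' : dist y x < ε / 2 := by rwa [dist_comm y x] at h2
          linarith
  have hIdisj : Disjoint (⋃ x ∈ A, ball x (ε / 2)) (ball T (a - ε / 2)) := by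
    rw [Set.disjoint_left]
    intro y hy hy2
    simp only [Set.mem_iUnion] at hy
    obtain ⟨x, hx, hyx⟩ := hy
    have h1 := (hd x hx).1
    have h2 := mem_ball.1 hyx
    have h3 := mem_ball.1 hy2
    have h4 := dist_triangle x y T
    rw [dist_comm x y] at h4
    linarith
  have hmono : volume ((⋃ x ∈ A, ball x (ε / 2)) ∪ ball T (a - ε / 2))
      ≤ volume (closedBall T (b + ε / 2)) := by
    apply measure_mono
    apply Set.union_subset hUsub
    refine fun y hy => mem_closedBall.2 ?_
    have h3 := mem_ball.1 hy
    linarith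
  have hsum : volume ((⋃ x ∈ A, ball x (ε / 2)) ∪ ball T (a - ε / 2))
      = (A.card : ℝ≥0∞) * ENNReal.ofReal ((ε / 2) ^ 2) * v
        + ENNReal.ofReal ((a - ε / 2) ^ 2) * v := by
    rw [measure_union hIdisj measurableSet_ball,
      measure_biUnion_finset hdisj (fun _ _ => measurableSet_ball)]
    have hball : ∀ x : EuclideanSpace ℝ (Fin 2),
        volume (ball x (ε / 2)) = ENNReal.ofReal ((ε / 2) ^ 2) * v := by
      intro x
      rw [Measure.addHaar_ball volume x (by linarith : (0:ℝ) ≤ ε / 2),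
        finrank_euclideanSpace_fin]
    rw [Measure.addHaar_ball volume T (by linarith : (0:ℝ) ≤ a - ε / 2),
      finrank_euclideanSpace_fin]
    simp only [hball, Finset.sum_const, nsmul_eq_mul, mul_assoc]
    rfl
  have hcb : volume (closedBall T (b + ε / 2)) = ENNReal.ofReal ((b + ε / 2) ^ 2) * v := by
    rw [Measure.addHaar_closedBall volume T (by linarith : (0:ℝ) ≤ b + ε / 2),
      finrank_euclideanSpace_fin]
  rw [hsum, hcb] at hmono
  rw [← add_mul] at hmono
  have hkey : (A.card : ℝ≥0∞) * ENNReal.ofReal ((ε / 2) ^ 2) + ENNReal.ofReal ((a - ε / 2) ^ 2)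
      ≤ ENNReal.ofReal ((b + ε / 2) ^ 2) :=
    (ENNReal.mul_le_mul_iff_left hv0 hvt).1 hmono
  have : ENNReal.ofReal ((A.card : ℝ) * (ε / 2) ^ 2 + (a - ε / 2) ^ 2)
      ≤ ENNReal.ofReal ((b + ε / 2) ^ 2) := by
    rw [ENNReal.ofReal_add (by positivity) (by positivity), ENNReal.ofReal_mul (by positivity)]
    simpa [ENNReal.ofReal_natCast] using hkey
  exact (ENNReal.ofReal_le_ofReal_iff (by positivity)).1 this

lemma my_series (κ : ℝ) (hκ : 2 < κ) (N : ℕ) :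
    ∑ k ∈ Finset.range N, (k : ℝ) ^ (1 - κ) ≤ 1 + 1 / (κ - 2) := by
  have hpos : 0 < κ - 2 := by linarith
  match N with
  | 0 => simp; positivity
  | 1 =>
    simp [Real.zero_rpow (by linarith : 1 - κ ≠ 0)]
    positivity
  | (M + 2) =>
    rw [Finset.sum_range_succ']
    rw [Finset.sum_range_succ']
    have h0 : ((0:ℕ) : ℝ) ^ (1 - κ) = 0 := by
      simp [Real.zero_rpow (by linarith : 1 - κ ≠ 0)]
    have h1 : (((0:ℕ) + 1 : ℕ) : ℝ) ^ (1 - κ) = 1 := by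
      norm_num
    rw [h0, h1]
    have hanti : AntitoneOn (fun x : ℝ => x ^ (1 - κ)) (Set.Icc 1 (1 + (M:ℝ))) := by
      intro x hx y hy hxy
      exact Real.rpow_le_rpow_of_nonpos (lt_of_lt_of_le one_pos hx.1) hxy (by linarith)
    have hint := hanti.sum_le_integral
    have hval : ∫ x in (1:ℝ)..(1 + (M:ℝ)), x ^ (1 - κ)
        = ((1 + (M:ℝ)) ^ (1 - κ + 1) - 1 ^ (1 - κ + 1)) / (1 - κ + 1) := by
      rw [integral_rpow]
      right
      constructor
      · intro h; linarith
      · intro h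
        rw [Set.mem_uIcc] at h
        rcases h with h | h
        · linarith [h.1]
        · linarith [h.2, (Nat.cast_nonneg M : (0:ℝ) ≤ M)]
    have hbound : ∑ i ∈ Finset.range M, ((1:ℝ) + ((i + 1 : ℕ) : ℝ)) ^ (1 - κ)
        ≤ ((1 + (M:ℝ)) ^ (1 - κ + 1) - 1) / (1 - κ + 1) := by
      rw [hval, Real.one_rpow] at hint
      exact hint
    have hterm : ∀ i ∈ Finset.range M,
        ((((i + 1 : ℕ)) + 1 : ℕ) : ℝ) ^ (1 - κ) = ((1:ℝ) + ((i + 1 : ℕ) : ℝ)) ^ (1 - κ) := by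
      intro i _
      norm_num; ring_nf
    rw [Finset.sum_congr rfl hterm]
    have hfinal : ((1 + (M:ℝ)) ^ (1 - κ + 1) - 1) / (1 - κ + 1) ≤ 1 / (κ - 2) := by
      have hx : (0:ℝ) ≤ (1 + (M:ℝ)) ^ (1 - κ + 1) := Real.rpow_nonneg (by positivity) _
      have heq : ((1 + (M:ℝ)) ^ (1 - κ + 1) - 1) / (1 - κ + 1)
          = (1 - (1 + (M:ℝ)) ^ (1 - κ + 1)) / (κ - 2) := by
        rw [div_eq_div_iff (by linarith) (by linarith)]
        ring
      rw [heq]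
      gcongr
      linarith
    linarith

theorem stmt_16 (n : ℕ) (s t : Fin n → EuclideanSpace ℝ (Fin 2)) (p c : Fin n → ℝ)
    (r R δ κ Pmin Pmax cup : ℝ) (hκ : 2 < κ) (hδ : 0 < δ) (hδ1 : δ ≤ 1) (hR : 0 < R)
    (hrdef : r = δ * R)
    (hinj : Function.Injective (Sum.elim s t))
    (hnodesep : ∀ x y : Fin n ⊕ Fin n, x ≠ y →
      δ * R ≤ dist (Sum.elim s t x) (Sum.elim s t y))
    (hlen : ∀ i, r ≤ dist (s i) (t i) ∧ dist (s i) (t i) ≤ R)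
    (hPmin : 0 < Pmin) (hp : ∀ i, Pmin ≤ p i ∧ p i ≤ Pmax)
    (hc : ∀ i, 0 < c i ∧ c i ≤ cup) :
    ∀ i, c i * ∑ j ∈ Finset.univ.filter (fun j => j ≠ i),
        (p j * dist (s i) (t i) ^ κ) / (p i * dist (s j) (t i) ^ κ) ≤
      cup * (Pmax / Pmin) *
        (2 ^ (2 * κ + 1) * Real.sqrt 3 * Real.pi * κ / (6 * (κ - 2) * δ ^ κ)) := by
  intro i
  classical
  have hκ0 : (0:ℝ) ≤ κ := by linarith
  have hκ2 : 0 < κ - 2 := by linarith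
  have hε : 0 < δ * R := by positivity
  set ε := δ * R with hεdef
  set F := Finset.univ.filter (fun j : Fin n => j ≠ i) with hF
  -- basic separation facts
  have hsinj : Function.Injective s := by
    intro a b hab
    have : Sum.elim s t (Sum.inl a) = Sum.elim s t (Sum.inl b) := hab
    exact Sum.inl.inj (hinj this)
  have hss : ∀ j j' : Fin n, j ≠ j' → ε ≤ dist (s j) (s j') := by
    intro j j' hjj'
    exact hnodesep (Sum.inl j) (Sum.inl j') (by simp [hjj'])
  have hst : ∀ j : Fin n, ε ≤ dist (s j) (t i) := by
    intro j
    exact hnodesep (Sum.inl j) (Sum.inr i) (by simp)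
  set d : Fin n → ℝ := fun j => dist (s j) (t i) with hd
  have hdpos : ∀ j, 0 < d j := fun j => lt_of_lt_of_le hε (hst j)
  set K : Fin n → ℕ := fun j => ⌊d j / ε⌋₊ with hKdef
  have hK1 : ∀ j, 1 ≤ K j := by
    intro j
    apply Nat.le_floor
    rw [Nat.cast_one, le_div_iff₀ hε, one_mul]
    exact hst j
  have hKlow : ∀ j, (K j : ℝ) * ε ≤ d j := by
    intro j
    have := Nat.floor_le (by positivity : (0:ℝ) ≤ d j / ε)
    calc (K j : ℝ) * ε ≤ (d j / ε) * ε := by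
          apply mul_le_mul_of_nonneg_right this hε.le
      _ = d j := by field_simp
  have hKhigh : ∀ j, d j ≤ ((K j : ℝ) + 1) * ε := by
    intro j
    have := (Nat.lt_floor_add_one (d j / ε)).le
    calc d j = (d j / ε) * ε := by field_simp
      _ ≤ ((K j : ℝ) + 1) * ε := mul_le_mul_of_nonneg_right this hε.le
  -- counting points in each annulus
  have hcount : ∀ k ∈ F.image K, ((F.filter (fun j => K j = k)).card : ℝ) ≤ 16 * k + 8 := by
    intro k hk
    obtain ⟨j0, hj0F, hj0⟩ := Finset.mem_image.1 hk
    have hk1 : 1 ≤ k := hj0 ▸ hK1 j0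
    have hk1R : (1:ℝ) ≤ (k:ℝ) := by exact_mod_cast hk1
    set G := F.filter (fun j => K j = k) with hG
    have hpack := my_packing (G.image s) (t i) ε ((k:ℝ) * ε) (((k:ℝ) + 1) * ε) hε
      (by nlinarith) (by nlinarith) ?_ ?_
    · have hcards : (G.image s).card = G.card := Finset.card_image_of_injective _ hsinj
      rw [hcards] at hpack
      nlinarith [hpack, mul_pos hε hε, (Nat.cast_nonneg G.card : (0:ℝ) ≤ G.card)]
    · intro x hx y hy hxy
      obtain ⟨j, hjG, rfl⟩ := Finset.mem_image.1 hx
      obtain ⟨j', hj'G, rfl⟩ := Finset.mem_image.1 hy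
      exact hss j j' (fun h => hxy (by rw [h]))
    · intro x hx
      obtain ⟨j, hjG, rfl⟩ := Finset.mem_image.1 hx
      have hKj : K j = k := (Finset.mem_filter.1 hjG).2
      constructor
      · have := hKlow j
        rw [hKj] at this
        exact this
      · have := hKhigh j
        rw [hKj] at this
        exact this
  -- termwise bounds
  set g : ℕ → ℝ := fun k => (1 / δ ^ κ) * ((k:ℝ)) ^ (-κ) with hgdef
  have hgnonneg : ∀ k, 0 ≤ g k := by
    intro k
    have h1 : (0:ℝ) ≤ 1 / δ ^ κ := by positivity
    exact mul_nonneg h1 (Real.rpow_nonneg (Nat.cast_nonneg k) _)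
  have hterm : ∀ j ∈ F, R ^ κ / (d j) ^ κ ≤ g (K j) := by
    intro j _
    have hKpos : (0:ℝ) < (K j : ℝ) := by exact_mod_cast hK1 j
    have hKε : (0:ℝ) < (K j : ℝ) * ε := by positivity
    have h1 : ((K j : ℝ) * ε) ^ κ ≤ (d j) ^ κ :=
      Real.rpow_le_rpow hKε.le (hKlow j) hκ0
    have h2 : R ^ κ / (d j) ^ κ ≤ R ^ κ / ((K j : ℝ) * ε) ^ κ := by
      apply div_le_div_of_nonneg_left (Real.rpow_nonneg hR.le κ)
        (Real.rpow_pos_of_pos hKε κ) h1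
    refine h2.trans_eq ?_
    show R ^ κ / ((K j : ℝ) * ε) ^ κ = 1 / δ ^ κ * ((K j : ℝ)) ^ (-κ)
    rw [hεdef, ← mul_assoc, Real.mul_rpow (by positivity) hR.le,
      Real.mul_rpow hKpos.le hδ.le, Real.rpow_neg hKpos.le]
    have hδκ : (0:ℝ) < δ ^ κ := Real.rpow_pos_of_pos hδ κ
    have hRκ : (0:ℝ) < R ^ κ := Real.rpow_pos_of_pos hR κ
    have hKκ : (0:ℝ) < (K j : ℝ) ^ κ := Real.rpow_pos_of_pos hKpos κ
    field_simp
  -- group by annuli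
  have hmaps : ∀ j ∈ F, K j ∈ F.image K := fun j hj => Finset.mem_image_of_mem K hj
  have hgroup : ∑ j ∈ F, g (K j)
      = ∑ k ∈ F.image K, ∑ _j ∈ F.filter (fun j => K j = k), g k :=
    (Finset.sum_fiberwise_of_maps_to' hmaps g).symm
  set h' : ℕ → ℝ := fun k => 24 * (1 / δ ^ κ) * (k:ℝ) ^ (1 - κ) with hh'def
  have hh'nonneg : ∀ k, 0 ≤ h' k := by
    intro k
    have h1 : (0:ℝ) ≤ 1 / δ ^ κ := by positivity
    have := Real.rpow_nonneg (Nat.cast_nonneg k : (0:ℝ) ≤ (k:ℝ)) (1 - κ)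
    positivity
  have hstep : ∀ k ∈ F.image K,
      ∑ _j ∈ F.filter (fun j => K j = k), g k ≤ h' k := by
    intro k hk
    obtain ⟨j0, hj0F, hj0⟩ := Finset.mem_image.1 hk
    have hk1 : 1 ≤ k := hj0 ▸ hK1 j0
    have hkR : (1:ℝ) ≤ (k:ℝ) := by exact_mod_cast hk1
    have hkpos : (0:ℝ) < (k:ℝ) := by linarith
    rw [Finset.sum_const, nsmul_eq_mul]
    calc ((F.filter (fun j => K j = k)).card : ℝ) * g k
        ≤ (16 * k + 8) * g k :=
          mul_le_mul_of_nonneg_right (hcount k hk) (hgnonneg k)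
      _ ≤ h' k := by
          rw [hgdef, hh'def]
          simp only
          have hsplit : (k:ℝ) ^ (1 - κ) = (k:ℝ) * (k:ℝ) ^ (-κ) := by
            rw [show (1 - κ) = 1 + (-κ) by ring, Real.rpow_add hkpos, Real.rpow_one]
          rw [hsplit]
          have hrn : (0:ℝ) ≤ (k:ℝ) ^ (-κ) := Real.rpow_nonneg hkpos.le _
          have h16 : (16 * (k:ℝ) + 8) ≤ 24 * (k:ℝ) := by linarith
          have hδκ : (0:ℝ) < 1 / δ ^ κ := by positivity
          calc (16 * (k:ℝ) + 8) * (1 / δ ^ κ * (k:ℝ) ^ (-κ))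
              ≤ 24 * (k:ℝ) * (1 / δ ^ κ * (k:ℝ) ^ (-κ)) := by
                apply mul_le_mul_of_nonneg_right h16 (by positivity)
            _ = 24 * (1 / δ ^ κ) * ((k:ℝ) * (k:ℝ) ^ (-κ)) := by ring
  -- sum over annulus indices
  set Nmax := (F.image K).sup id + 1 with hNmax
  have hsubset : F.image K ⊆ Finset.range Nmax := by
    intro k hk
    rw [Finset.mem_range, hNmax]
    exact Nat.lt_succ_of_le (Finset.le_sup (f := id) hk)
  have hrange : ∑ k ∈ F.image K, h' k ≤ ∑ k ∈ Finset.range Nmax, h' k :=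
    Finset.sum_le_sum_of_subset_of_nonneg hsubset (fun k _ _ => hh'nonneg k)
  have hseries : ∑ k ∈ Finset.range Nmax, h' k
      ≤ 24 * (1 / δ ^ κ) * (1 + 1 / (κ - 2)) := by
    rw [hh'def]
    simp only
    rw [← Finset.mul_sum]
    apply mul_le_mul_of_nonneg_left (my_series κ hκ Nmax) (by positivity)
  -- combining: the key sum bound
  have hTbound : ∑ j ∈ F, R ^ κ / (d j) ^ κ
      ≤ 24 * (1 / δ ^ κ) * (1 + 1 / (κ - 2)) := by
    calc ∑ j ∈ F, R ^ κ / (d j) ^ κ ≤ ∑ j ∈ F, g (K j) := Finset.sum_le_sum hterm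
      _ = ∑ k ∈ F.image K, ∑ _j ∈ F.filter (fun j => K j = k), g k := hgroup
      _ ≤ ∑ k ∈ F.image K, h' k := Finset.sum_le_sum hstep
      _ ≤ ∑ k ∈ Finset.range Nmax, h' k := hrange
      _ ≤ 24 * (1 / δ ^ κ) * (1 + 1 / (κ - 2)) := hseries
  -- numeric comparison with the φ constant
  have hnum : 24 * (1 / δ ^ κ) * (1 + 1 / (κ - 2))
      ≤ 2 ^ (2 * κ + 1) * Real.sqrt 3 * Real.pi * κ / (6 * (κ - 2) * δ ^ κ) := by
    have h32 : (32:ℝ) ≤ 2 ^ (2 * κ + 1) := by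
      have h5 : (2:ℝ) ^ (5:ℝ) ≤ 2 ^ (2 * κ + 1) :=
        Real.rpow_le_rpow_of_exponent_le one_le_two (by linarith)
      have e : (2:ℝ) ^ (5:ℝ) = 32 := by
        rw [show (5:ℝ) = ((5:ℕ):ℝ) by norm_num, Real.rpow_natCast]; norm_num
      linarith
    have hsqrt : (1.7:ℝ) ≤ Real.sqrt 3 := by
      rw [show (1.7:ℝ) = Real.sqrt (1.7 ^ 2) from (Real.sqrt_sq (by norm_num)).symm]
      exact Real.sqrt_le_sqrt (by norm_num)
    have hπ : (3:ℝ) ≤ Real.pi := Real.pi_gt_three.le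
    have hX1 : (32 * 1.7 : ℝ) ≤ 2 ^ (2 * κ + 1) * Real.sqrt 3 :=
      mul_le_mul h32 hsqrt (by norm_num) (by linarith)
    have hX : (32 * 1.7 * 3 : ℝ) ≤ 2 ^ (2 * κ + 1) * Real.sqrt 3 * Real.pi :=
      mul_le_mul hX1 hπ (by norm_num) (by nlinarith [Real.sqrt_nonneg 3])
    have hδκ : (0:ℝ) < δ ^ κ := Real.rpow_pos_of_pos hδ κ
    have hP : (144:ℝ) ≤ 2 ^ (2 * κ + 1) * Real.sqrt 3 * Real.pi := by linarith
    have hL : 24 * (1 / δ ^ κ) * (1 + 1 / (κ - 2))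
        = 144 * (κ - 1) / (6 * (κ - 2) * δ ^ κ) := by
      field_simp
      ring
    rw [hL]
    gcongr <;> linarith
  -- final assembly
  have hρ : (0:ℝ) ≤ Pmax / Pmin :=
    div_nonneg (hPmin.le.trans ((hp i).1.trans (hp i).2)) hPmin.le
  have hcup : (0:ℝ) ≤ cup := le_of_lt (lt_of_lt_of_le (hc i).1 (hc i).2)
  have hSnonneg : (0:ℝ) ≤ ∑ j ∈ F,
      (p j * dist (s i) (t i) ^ κ) / (p i * dist (s j) (t i) ^ κ) := by
    apply Finset.sum_nonneg
    intro j _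
    have hpj : 0 ≤ p j := le_of_lt (lt_of_lt_of_le hPmin (hp j).1)
    have hpi : 0 ≤ p i := le_of_lt (lt_of_lt_of_le hPmin (hp i).1)
    have h1 := Real.rpow_nonneg (dist_nonneg : (0:ℝ) ≤ dist (s i) (t i)) κ
    have h2 := Real.rpow_nonneg (dist_nonneg : (0:ℝ) ≤ dist (s j) (t i)) κ
    exact div_nonneg (mul_nonneg hpj h1) (mul_nonneg hpi h2)
  have hSbound : ∑ j ∈ F, (p j * dist (s i) (t i) ^ κ) / (p i * dist (s j) (t i) ^ κ)
      ≤ (Pmax / Pmin) * ∑ j ∈ F, R ^ κ / (d j) ^ κ := by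
    rw [Finset.mul_sum]
    apply Finset.sum_le_sum
    intro j _
    have hpj : p j ≤ Pmax := (hp j).2
    have hpi : Pmin ≤ p i := (hp i).1
    have hdjκ : (0:ℝ) < (d j) ^ κ := Real.rpow_pos_of_pos (hdpos j) κ
    have hdi : dist (s i) (t i) ^ κ ≤ R ^ κ :=
      Real.rpow_le_rpow dist_nonneg (hlen i).2 hκ0
    have hnum' : p j * dist (s i) (t i) ^ κ ≤ Pmax * R ^ κ :=
      mul_le_mul hpj hdi (Real.rpow_nonneg dist_nonneg κ)
        (le_trans (le_of_lt (lt_of_lt_of_le hPmin (hp j).1)) hpj)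
    have hden : Pmin * (d j) ^ κ ≤ p i * (d j) ^ κ :=
      mul_le_mul_of_nonneg_right hpi hdjκ.le
    calc (p j * dist (s i) (t i) ^ κ) / (p i * dist (s j) (t i) ^ κ)
        ≤ (Pmax * R ^ κ) / (Pmin * (d j) ^ κ) := by
          have hPmax0 : (0:ℝ) ≤ Pmax := le_trans hPmin.le ((hp i).1.trans (hp i).2)
          exact div_le_div₀ (mul_nonneg hPmax0 (Real.rpow_nonneg hR.le κ)) hnum'
            (mul_pos hPmin hdjκ) hden
      _ = (Pmax / Pmin) * (R ^ κ / (d j) ^ κ) := (div_mul_div_comm _ _ _ _).symm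
  calc c i * ∑ j ∈ F, (p j * dist (s i) (t i) ^ κ) / (p i * dist (s j) (t i) ^ κ)
      ≤ cup * ∑ j ∈ F, (p j * dist (s i) (t i) ^ κ) / (p i * dist (s j) (t i) ^ κ) :=
        mul_le_mul_of_nonneg_right (hc i).2 hSnonneg
    _ ≤ cup * ((Pmax / Pmin) * ∑ j ∈ F, R ^ κ / (d j) ^ κ) :=
        mul_le_mul_of_nonneg_left hSbound hcup
    _ ≤ cup * ((Pmax / Pmin) * (24 * (1 / δ ^ κ) * (1 + 1 / (κ - 2)))) :=
        mul_le_mul_of_nonneg_left (mul_le_mul_of_nonneg_left hTbound hρ) hcup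
    _ ≤ cup * ((Pmax / Pmin) *
          (2 ^ (2 * κ + 1) * Real.sqrt 3 * Real.pi * κ / (6 * (κ - 2) * δ ^ κ))) :=
        mul_le_mul_of_nonneg_left (mul_le_mul_of_nonneg_left hnum hρ) hcup
    _ = cup * (Pmax / Pmin) *
          (2 ^ (2 * κ + 1) * Real.sqrt 3 * Real.pi * κ / (6 * (κ - 2) * δ ^ κ)) := by ring
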